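/- (Unconditional stability.) Let ω₀ ∈ (0,1), s₁, s₂ ∈ (0,2) and θ ∈ ℝ. Then every complex root λ of the characteristic polynomial p(λ) = λ³ + p₂λ² + p₁λ + p₀ of the MRT-LB scheme satisfies |λ| ≤ 1; consequently the four-level finite-difference scheme derived from the MRT-LB model for the one-dimensional diffusion equation is unconditionally stable in the von Neumann sense. -/

import Mathlib

open Polynomial

/-- No real root greater than 1 for a "Jury-satisfying" real cubic. -/
lemma real_case (a b c x : ℝ)
    (h1 : 0 ≤ 1 + a + b + c)
    (hc : c ^ 2 < 1)
    (hJ : b - a * c ≤ 1 - c ^ 2)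
    (heq : x ^ 3 + a * x ^ 2 + b * x + c = 0)
    (hx : 1 < x) : False := by
  set γ : ℝ := x ^ 2 + a * x + b with hγdef
  have hγc : c = -(x * γ) := by rw [hγdef]; linear_combination heq
  have hx2 : 1 < x ^ 2 := by nlinarith
  have hcs : x ^ 2 * γ ^ 2 < 1 := by
    have h' : c ^ 2 = x ^ 2 * γ ^ 2 := by rw [hγc]; ring
    linarith [h'.ge, h'.le, hc]
  have hγ2 : γ ^ 2 < 1 := by nlinarith [hcs, hx2, sq_nonneg γ]
  have h1γ : 0 < 1 - γ := by nlinarith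
  have key1 : 0 ≤ (1 - γ) * (1 + x ^ 2 * γ + x * (a + x)) := by
    have hEq : (1 - γ) * (1 + x ^ 2 * γ + x * (a + x)) = (1 - c ^ 2) - (b - a * c) := by
      rw [hγc, hγdef]; ring
    linarith [hJ, hEq.ge, hEq.le]
  have key2 : 0 ≤ 1 + x ^ 2 * γ + x * (a + x) := by nlinarith [key1, h1γ]
  have hsum : (1 - x) * (1 + (a + x) + γ) = 1 + a + b + c := by
    rw [hγc, hγdef]; ring
  have hβ : 1 + (a + x) + γ ≤ 0 := by nlinarith [h1, hsum.ge, hsum.le]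
  have hxg : x * γ < 1 := by nlinarith [sq_nonneg (x * γ)]
  nlinarith [key2, hβ, hxg, mul_pos (show (0:ℝ) < x - 1 by linarith) (show (0:ℝ) < 1 - x*γ by linarith)]

lemma cubic_disk (a b c x y : ℝ)
    (h1 : 0 ≤ 1 + a + b + c)
    (h2 : -1 + a - b + c ≤ 0)
    (hc : c ^ 2 < 1)
    (hJ : b - a * c ≤ 1 - c ^ 2)
    (hre : x ^ 3 - 3 * x * y ^ 2 + a * (x ^ 2 - y ^ 2) + b * x + c = 0)
    (him : 3 * x ^ 2 * y - y ^ 3 + a * (2 * x * y) + b * y = 0) :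
    x ^ 2 + y ^ 2 ≤ 1 := by
  rcases eq_or_ne y 0 with hy | hy
  · subst hy
    have heq : x ^ 3 + a * x ^ 2 + b * x + c = 0 := by linear_combination hre
    by_contra hcon
    push_neg at hcon
    have hx2 : 1 < x ^ 2 := by nlinarith [hcon]
    have : 1 < x ∨ x < -1 := by
      rcases le_or_gt x 0 with h | h
      · right; nlinarith
      · left; nlinarith
    rcases this with hx | hx
    · exact real_case a b c x h1 hc hJ heq hx
    · refine real_case (-a) b (-c) (-x) (by linarith) (by nlinarith) (by nlinarith)
        (by linear_combination -heq) (by linarith)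
  · -- complex root case
    have hfac : y * (3 * x ^ 2 - y ^ 2 + 2 * a * x + b) = 0 := by linear_combination him
    have hb : b = y ^ 2 - 3 * x ^ 2 - 2 * a * x := by
      rcases mul_eq_zero.mp hfac with h | h
      · exact absurd h hy
      · linarith
    have hcc : c = (2 * x + a) * (x ^ 2 + y ^ 2) := by
      rw [hb] at hre; linear_combination hre
    set m : ℝ := x ^ 2 + y ^ 2 with hmdef
    set r : ℝ := -(a + 2 * x) with hrdef
    by_contra hcon
    push_neg at hcon
    have hm1 : 1 < m := hcon
    have hJ' : 0 ≤ (1 - m) * (1 + r ^ 2 * m - 2 * x * r) := by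
      have hEq : (1 - m) * (1 + r ^ 2 * m - 2 * x * r) = (1 - c ^ 2) - (b - a * c) := by
        rw [hcc, hb, hrdef, hmdef]; ring
      linarith [hJ, hEq.ge, hEq.le]
    have h2xr : 1 + r ^ 2 * m ≤ 2 * x * r := by nlinarith [hJ']
    have hy2 : 0 < y ^ 2 := by positivity
    have hry : r * y = 0 := by nlinarith [sq_nonneg (r * x - 1), sq_nonneg (r * y)]
    have hr0 : r = 0 := by
      rcases mul_eq_zero.mp hry with h | h
      · exact h
      · exact absurd h hy
    rw [hr0] at h2xr
    nlinarith [h2xr]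

/-- Unconditional stability: For `ω₀ ∈ (0,1)`, `s₁, s₂ ∈ (0,2)`
and every `θ`, all complex roots of the characteristic polynomial of the MRT-LB
scheme have modulus at most 1, i.e. the four-level finite-difference scheme is
unconditionally stable in the von Neumann sense. -/
theorem mrt_lb_unconditional_stability
    (ω₀ s₁ s₂ θ p₀ p₁ p₂ : ℝ)
    (hω₀ : ω₀ ∈ Set.Ioo (0 : ℝ) 1)
    (hs₁ : s₁ ∈ Set.Ioo (0 : ℝ) 2)
    (hs₂ : s₂ ∈ Set.Ioo (0 : ℝ) 2)
    (hp₀ : p₀ = (s₁ - 1) * (1 - s₂))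
    (hp₁ : p₁ = (s₁ - 1) * (s₂ * ω₀ - 1)
      + ((s₁ - 2) * (s₂ - 1) + s₂ * ω₀ * (1 - s₁)) * Real.cos θ)
    (hp₂ : p₂ = s₂ - s₂ * ω₀ - 1 + (s₂ * ω₀ + s₁ - 2) * Real.cos θ) :
    ∀ lam : ℂ,
      (X ^ 3 + C (p₂ : ℂ) * X ^ 2 + C (p₁ : ℂ) * X + C (p₀ : ℂ)).IsRoot lam →
      ‖lam‖ ≤ 1 := by
  intro lam hroot
  obtain ⟨hw0, hw1⟩ := hω₀
  obtain ⟨hs10, hs12⟩ := hs₁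
  obtain ⟨hs20, hs22⟩ := hs₂
  have hcos1 : Real.cos θ ≤ 1 := Real.cos_le_one θ
  have hcosm : -1 ≤ Real.cos θ := Real.neg_one_le_cos θ
  set cth : ℝ := Real.cos θ with hcth
  -- the evaluation equation
  have hev : lam ^ 3 + (p₂ : ℂ) * lam ^ 2 + (p₁ : ℂ) * lam + (p₀ : ℂ) = 0 := by
    simpa [Polynomial.IsRoot, Polynomial.eval_add, Polynomial.eval_mul,
      Polynomial.eval_pow, Polynomial.eval_C, Polynomial.eval_X] using hroot
  set x : ℝ := lam.re with hx
  set y : ℝ := lam.im with hy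
  have hre : x ^ 3 - 3 * x * y ^ 2 + p₂ * (x ^ 2 - y ^ 2) + p₁ * x + p₀ = 0 := by
    have h := congrArg Complex.re hev
    simp only [Complex.add_re, Complex.mul_re, Complex.ofReal_re, Complex.ofReal_im,
      Complex.zero_re, pow_succ, pow_zero, one_mul, Complex.mul_im] at h
    linear_combination h
  have him : 3 * x ^ 2 * y - y ^ 3 + p₂ * (2 * x * y) + p₁ * y = 0 := by
    have h := congrArg Complex.im hev
    simp only [Complex.add_im, Complex.mul_im, Complex.mul_re, Complex.ofReal_re,
      Complex.ofReal_im, Complex.zero_im, pow_succ, pow_zero, one_mul] at h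
    linear_combination h
  -- the four Jury-type hypotheses
  have h1 : 0 ≤ 1 + p₂ + p₁ + p₀ := by
    have hid : 1 + p₂ + p₁ + p₀ = s₂ * (2 - s₁) * (1 - ω₀) * (1 - cth) := by
      rw [hp₀, hp₁, hp₂]; ring
    rw [hid]
    have := mul_nonneg (mul_nonneg (mul_nonneg hs20.le (by linarith : (0:ℝ) ≤ 2 - s₁))
      (by linarith : (0:ℝ) ≤ 1 - ω₀)) (by linarith : (0:ℝ) ≤ 1 - cth)
    linarith
  have h2 : -1 + p₂ - p₁ + p₀ ≤ 0 := by
    have hid : -1 + p₂ - p₁ + p₀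
        = -((2 - s₁) * (2 - s₂) * (1 + cth)) - s₁ * s₂ * ω₀ * (1 - cth) := by
      rw [hp₀, hp₁, hp₂]; ring
    rw [hid]
    have t1 := mul_nonneg (mul_nonneg (by linarith : (0:ℝ) ≤ 2 - s₁)
      (by linarith : (0:ℝ) ≤ 2 - s₂)) (by linarith : (0:ℝ) ≤ 1 + cth)
    have t2 := mul_nonneg (mul_nonneg (mul_nonneg hs10.le hs20.le) hw0.le)
      (by linarith : (0:ℝ) ≤ 1 - cth)
    linarith
  have hc : p₀ ^ 2 < 1 := by
    rw [hp₀]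
    have e1 : (s₁ - 1) ^ 2 < 1 := by nlinarith
    have e2 : (1 - s₂) ^ 2 < 1 := by nlinarith
    nlinarith [sq_nonneg (s₁ - 1), sq_nonneg (1 - s₂)]
  have hJ : p₁ - p₂ * p₀ ≤ 1 - p₀ ^ 2 := by
    set k : ℝ := (1 - s₁) * (1 - s₂) with hk
    have hk1 : 0 < 1 - k := by rw [hk]; nlinarith
    have hk2 : 0 < 1 + k := by rw [hk]; nlinarith
    have hid : 2 * ((1 - p₀ ^ 2) - (p₁ - p₂ * p₀))
        = (1 + cth) * (s₁ * s₂ * (1 - k))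
          + (1 - cth) * (1 - ω₀) * (s₁ * (2 - s₂) * (1 + k))
          + (1 - cth) * ω₀ * ((2 - s₁) * (2 - s₂) * (1 - k)) := by
      rw [hp₀, hp₁, hp₂, hk]; ring
    have t1 := mul_nonneg (by linarith : (0:ℝ) ≤ 1 + cth)
      (mul_nonneg (mul_nonneg hs10.le hs20.le) hk1.le)
    have t2 := mul_nonneg (mul_nonneg (by linarith : (0:ℝ) ≤ 1 - cth)
      (by linarith : (0:ℝ) ≤ 1 - ω₀))
      (mul_nonneg (mul_nonneg hs10.le (by linarith : (0:ℝ) ≤ 2 - s₂)) hk2.le)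
    have t3 := mul_nonneg (mul_nonneg (by linarith : (0:ℝ) ≤ 1 - cth) hw0.le)
      (mul_nonneg (mul_nonneg (by linarith : (0:ℝ) ≤ 2 - s₁)
        (by linarith : (0:ℝ) ≤ 2 - s₂)) hk1.le)
    linarith
  have hmain : x ^ 2 + y ^ 2 ≤ 1 := cubic_disk p₂ p₁ p₀ x y h1 h2 hc hJ hre him
  -- conclude
  have habs : ‖lam‖ = Real.sqrt (x ^ 2 + y ^ 2) := by
    rw [Complex.norm_def, Complex.normSq_apply, hx, hy]; ring_nf
  rw [habs]
  have := Real.sqrt_le_sqrt hmain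
  simpa using this
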